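/- Let n ≥ 4 and let w ∈ W be a basic involution with w(1) = −n. Let u = s_n s_{n−2} s_{n−3}⋯s_2 s_1 (the element u of the previous construction for j = n, i.e. u(1) = −n, u(i) = i−1 for 2 ≤ i ≤ n−1, u(n) = −(n−1)), let v = u^{−1}w, and let g_0 = u s_1 (so g_0(1) = 1, g_0(2) = −n, g_0(i) = i−1 for 3 ≤ i ≤ n−1, g_0(n) = −(n−1)). Then g_0 ≤ v^{−1} in the Bruhat order on W. -/

import Mathlib

/-!
The Weyl group of type `Dₙ`, realized as the group of permutations `w` of `ℤ`
supported on `{±1, …, ±n}` with `w (-i) = - w i` and an even number of sign changes.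
-/

open Equiv

/-- The simple reflections of type `Dₙ`, indexed by `i ∈ {1, …, n}`:
`sᵢ = (i, i+1)(-i, -(i+1))` for `1 ≤ i ≤ n - 1`, and
`sₙ = (n-1, -n)(-(n-1), n)`. -/
def simpleRefl (n : ℕ) (i : ℕ) : Equiv.Perm ℤ :=
  if i < n then Equiv.swap (i : ℤ) ((i : ℤ) + 1) * Equiv.swap (-(i : ℤ)) (-((i : ℤ) + 1))
  else Equiv.swap ((n : ℤ) - 1) (-(n : ℤ)) * Equiv.swap (-((n : ℤ) - 1)) (n : ℤ)

/-- A word in the letters `{1, …, n}` (indices of simple reflections). -/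
def IsWord (n : ℕ) (L : List ℕ) : Prop := ∀ i ∈ L, 1 ≤ i ∧ i ≤ n

/-- The product `s_{i₁} ⋯ s_{i_l}` of the word `L = [i₁, …, i_l]`. -/
def wordProd (n : ℕ) (L : List ℕ) : Equiv.Perm ℤ := (L.map (simpleRefl n)).prod

/-- Membership in the Weyl group `W` of type `Dₙ`: a permutation of `ℤ` commuting with
negation, fixing every integer of absolute value `> n`, and with an even number of
`i ∈ {1, …, n}` such that `w i < 0`. -/
def IsD (n : ℕ) (w : Equiv.Perm ℤ) : Prop :=
  (∀ i : ℤ, w (-i) = -(w i)) ∧ (∀ i : ℤ, (n : ℤ) < |i| → w i = i) ∧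
    Even (((Finset.Icc (1 : ℤ) (n : ℤ)).filter fun i => w i < 0).card)

/-- The length `ℓ(w)`: the minimal number of factors in an expression of `w` as a
product of simple reflections. -/
noncomputable def weylLength (n : ℕ) (w : Equiv.Perm ℤ) : ℕ :=
  sInf {l | ∃ L : List ℕ, IsWord n L ∧ L.length = l ∧ wordProd n L = w}

/-- `L` is a reduced decomposition of `w`. -/
def IsReducedWord (n : ℕ) (w : Equiv.Perm ℤ) (L : List ℕ) : Prop :=
  IsWord n L ∧ wordProd n L = w ∧ L.length = weylLength n w

/-- `w` is a basic involution: `w ∈ W`, `w² = id`, and `w i ≠ -i` for all `i ∈ {1, …, n}`. -/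
def IsBasicInvolution (n : ℕ) (w : Equiv.Perm ℤ) : Prop :=
  IsD n w ∧ w * w = 1 ∧ ∀ i : ℤ, 1 ≤ i → i ≤ (n : ℤ) → w i ≠ -i

/-- The Bruhat order: `v ≤ w` iff some reduced decomposition of `v` is a subword of
some reduced decomposition of `w`. -/
def BruhatLE (n : ℕ) (v w : Equiv.Perm ℤ) : Prop :=
  ∃ Lv Lw : List ℕ, IsReducedWord n v Lv ∧ IsReducedWord n w Lw ∧ Lv.Sublist Lw

/-- Strict Bruhat order. -/
def BruhatLT (n : ℕ) (v w : Equiv.Perm ℤ) : Prop := BruhatLE n v w ∧ v ≠ w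

/-- The reflection in the root `ε_i - ε_j` (`plus = false`), i.e. the permutation
`(i,j)(-i,-j)`, or in `ε_i + ε_j` (`plus = true`), i.e. `(i,-j)(-i,j)`. -/
def rootRefl (i j : ℤ) (plus : Bool) : Equiv.Perm ℤ :=
  if plus then Equiv.swap i (-j) * Equiv.swap (-i) j
  else Equiv.swap i j * Equiv.swap (-i) (-j)

/-- The word `[j, j+1, …, n-1, n, n-2, n-3, …, 2, 1]`,
i.e. `u = s_j s_{j+1} ⋯ s_{n-1} sₙ s_{n-2} s_{n-3} ⋯ s₂ s₁`. -/
def uWordPlus (n j : ℕ) : List ℕ :=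
  ((List.range (n - j)).map fun t => j + t) ++ [n] ++ (List.range (n - 2)).reverse.map (· + 1)

/-- auxiliary statistic counter -/
def cc (a b : ℤ) : ℕ :=
  (if a < 0 then 1 else 0) +
  (if (0 < a ∧ 0 < b) ∨ (a < 0 ∧ b < 0) then (if b < a then 1 else 0)
   else (if 0 < a + b then 1 else 0))

lemma cc_neg_right (a b : ℤ) (ha : a ≠ 0) (hb : b ≠ 0) : cc a (-b) = cc a b := by
  unfold cc; split_ifs <;> omega

lemma cc_flip (a b : ℤ) (ha : a ≠ 0) (hb : b ≠ 0) (h1 : a ≠ b) (h2 : a ≠ -b) :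
    cc a b = cc b a + 1 ∨ cc b a = cc a b + 1 := by
  unfold cc; split_ifs <;> omega

lemma sR_eval_lt {n k : ℕ} (hk1 : 1 ≤ k) (hk : k < n) (i : ℤ) :
    simpleRefl n k i = if i = (k:ℤ) then (k:ℤ)+1 else if i = (k:ℤ)+1 then (k:ℤ)
      else if i = -(k:ℤ) then -(k:ℤ)-1 else if i = -(k:ℤ)-1 then -(k:ℤ) else i := by
  simp only [simpleRefl, if_pos hk, Perm.mul_apply, Equiv.swap_apply_def]
  split_ifs <;> omega

lemma sR_eval_top {n : ℕ} (hn : 2 ≤ n) (i : ℤ) :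
    simpleRefl n n i = if i = (n:ℤ)-1 then -(n:ℤ) else if i = -(n:ℤ) then (n:ℤ)-1
      else if i = (n:ℤ) then -(n:ℤ)+1 else if i = -(n:ℤ)+1 then (n:ℤ) else i := by
  simp only [simpleRefl, if_neg (lt_irrefl n), Perm.mul_apply, Equiv.swap_apply_def]
  split_ifs <;> omega
/-- the "signed permutation with support in [-n,n]" class -/
def SP (n : ℕ) (x : Perm ℤ) : Prop :=
  (∀ i : ℤ, x (-i) = -(x i)) ∧ (∀ i : ℤ, (n : ℤ) < |i| → x i = i)

lemma SP_one (n : ℕ) : SP n 1 := ⟨fun i => rfl, fun i _ => rfl⟩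

lemma SP_mul {n : ℕ} {x y : Perm ℤ} (hx : SP n x) (hy : SP n y) : SP n (x * y) := by
  refine ⟨fun i => ?_, fun i hi => ?_⟩
  · simp [Perm.mul_apply, hy.1, hx.1]
  · have h1 := hy.2 i hi
    simp only [Perm.mul_apply, h1]
    have : y i = i := h1
    exact hx.2 i hi

lemma SP_inv {n : ℕ} {x : Perm ℤ} (hx : SP n x) : SP n x⁻¹ := by
  constructor
  · intro i
    apply x.injective
    rw [show x (x⁻¹ (-i)) = -i from Equiv.apply_symm_apply x (-i)]
    rw [show (x (-(x⁻¹ i)) : ℤ) = -(x (x⁻¹ i)) from hx.1 _]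
    simp
  · intro i hi
    apply x.injective
    simp only [Perm.coe_inv, apply_symm_apply]
    exact (hx.2 i hi).symm

lemma SP_sR {n : ℕ} {k : ℕ} (hk1 : 1 ≤ k) (hk : k ≤ n) (hn : 2 ≤ n) :
    SP n (simpleRefl n k) := by
  rcases lt_or_eq_of_le hk with h | h
  · constructor
    · intro i; rw [sR_eval_lt hk1 h, sR_eval_lt hk1 h]; split_ifs <;> omega
    · intro i hi; rcases abs_cases i with ⟨h1,h2⟩|⟨h1,h2⟩ <;>
        (rw [sR_eval_lt hk1 h]; split_ifs <;> omega)
  · subst h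
    constructor
    · intro i; rw [sR_eval_top hn, sR_eval_top hn]; split_ifs <;> omega
    · intro i hi; rcases abs_cases i with ⟨h1,h2⟩|⟨h1,h2⟩ <;>
        (rw [sR_eval_top hn]; split_ifs <;> omega)

lemma sR_sq {n : ℕ} {k : ℕ} (hk1 : 1 ≤ k) (hk : k ≤ n) (hn : 2 ≤ n) :
    simpleRefl n k * simpleRefl n k = 1 := by
  ext i
  rcases lt_or_eq_of_le hk with h | h
  · simp only [Perm.mul_apply, Perm.one_apply, sR_eval_lt hk1 h]
    split_ifs <;> omega
  · subst h
    simp only [Perm.mul_apply, Perm.one_apply, sR_eval_top hn]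
    split_ifs <;> omega

lemma SP_ne_zero {n : ℕ} {x : Perm ℤ} (hx : SP n x) {i : ℤ} (hi : i ≠ 0) : x i ≠ 0 := by
  intro h
  have h2 : x (-i) = 0 := by rw [hx.1]; omega
  have := x.injective (h.trans h2.symm)
  omega

lemma SP_abs_le {n : ℕ} {x : Perm ℤ} (hx : SP n x) {i : ℤ} (hi : |i| ≤ n) : |x i| ≤ n := by
  by_contra h
  push_neg at h
  have h2 : x (x i) = x i := hx.2 _ h
  have := x.injective h2
  rcases abs_cases i with ⟨h1,h2⟩|⟨h1,h2⟩ <;> rcases abs_cases (x i) with ⟨h3,h4⟩|⟨h3,h4⟩ <;> omega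
noncomputable def NN (n : ℕ) (x : Perm ℤ) : ℕ :=
  ∑ p ∈ (Finset.Icc (1:ℤ) (n:ℤ)) ×ˢ (Finset.Icc (1:ℤ) (n:ℤ)),
    if p.1 < p.2 then cc (x p.1) (x p.2) else 0

def sw (m i : ℤ) : ℤ := if i = m then m+1 else if i = m+1 then m else i

lemma REST {n : ℕ} (x x' : Perm ℤ) (m : ℤ) (hm1 : 1 ≤ m) (hm2 : m + 1 ≤ (n:ℤ))
    (H : ∀ i j : ℤ, 1 ≤ i → i ≤ n → 1 ≤ j → j ≤ n → i < j → ¬(i = m ∧ j = m+1) →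
      cc (x' i) (x' j) = cc (x (sw m i)) (x (sw m j))) :
    NN n x' + cc (x m) (x (m+1)) = NN n x + cc (x' m) (x' (m+1)) := by
  classical
  set P := (Finset.Icc (1:ℤ) (n:ℤ)) ×ˢ (Finset.Icc (1:ℤ) (n:ℤ)) with hP
  set f : ℤ × ℤ → ℕ := fun p => if p.1 < p.2 then cc (x p.1) (x p.2) else 0 with hf
  set f' : ℤ × ℤ → ℕ := fun p => if p.1 < p.2 then cc (x' p.1) (x' p.2) else 0 with hf'
  have hq0 : ((m, m+1) : ℤ × ℤ) ∈ P := by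
    simp only [hP, Finset.mem_product, Finset.mem_Icc]; omega
  have hq1 : ((m+1, m) : ℤ × ℤ) ∈ P.erase (m, m+1) := by
    simp only [Finset.mem_erase, hP, Finset.mem_product, Finset.mem_Icc, Prod.mk.injEq, ne_eq]
    omega
  have key : ∑ p ∈ (P.erase (m, m+1)).erase (m+1, m), f' p
      = ∑ p ∈ (P.erase (m, m+1)).erase (m+1, m), f p := by
    apply Finset.sum_nbij' (fun p => (sw m p.1, sw m p.2)) (fun p => (sw m p.1, sw m p.2))
    · intro p hp
      simp only [Finset.mem_erase, hP, Finset.mem_product, Finset.mem_Icc,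
        Prod.mk.injEq, ne_eq, Prod.ext_iff] at hp ⊢
      simp only [sw]
      split_ifs <;> omega
    · intro p hp
      simp only [Finset.mem_erase, hP, Finset.mem_product, Finset.mem_Icc,
        Prod.mk.injEq, ne_eq, Prod.ext_iff] at hp ⊢
      simp only [sw]
      split_ifs <;> omega
    · intro p hp
      simp only [Prod.ext_iff, sw]
      constructor <;> (split_ifs <;> omega)
    · intro p hp
      simp only [Prod.ext_iff, sw]
      constructor <;> (split_ifs <;> omega)
    · intro p hp
      simp only [Finset.mem_erase, hP, Finset.mem_product, Finset.mem_Icc,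
        Prod.mk.injEq, ne_eq, Prod.ext_iff] at hp
      obtain ⟨h1, h2, ⟨hi1, hi2⟩, hj1, hj2⟩ := hp
      simp only [hf, hf']
      by_cases hlt : p.1 < p.2
      · rw [if_pos hlt]
        have hsw : sw m p.1 < sw m p.2 := by simp only [sw]; split_ifs <;> omega
        rw [if_pos hsw]
        exact H p.1 p.2 hi1 hi2 hj1 hj2 hlt (by omega)
      · rw [if_neg hlt]
        have hsw : ¬ (sw m p.1 < sw m p.2) := by simp only [sw]; split_ifs <;> omega
        rw [if_neg hsw]
  have e1 : NN n x' = f' (m, m+1) + (f' (m+1, m) + ∑ p ∈ (P.erase (m, m+1)).erase (m+1, m), f' p) := by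
    rw [Finset.add_sum_erase _ f' hq1, Finset.add_sum_erase _ f' hq0]; rfl
  have e2 : NN n x = f (m, m+1) + (f (m+1, m) + ∑ p ∈ (P.erase (m, m+1)).erase (m+1, m), f p) := by
    rw [Finset.add_sum_erase _ f hq1, Finset.add_sum_erase _ f hq0]; rfl
  have v1 : f' (m+1, m) = 0 := by simp only [hf']; rw [if_neg (by omega)]
  have v2 : f (m+1, m) = 0 := by simp only [hf]; rw [if_neg (by omega)]
  have v3 : f (m, m+1) = cc (x m) (x (m+1)) := by simp only [hf]; rw [if_pos (by omega)]
  have v4 : f' (m, m+1) = cc (x' m) (x' (m+1)) := by simp only [hf']; rw [if_pos (by omega)]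
  omega

lemma SP_inj_vals {n : ℕ} {x : Perm ℤ} (hx : SP n x) {i j : ℤ} (hij : i ≠ j) (hij2 : i ≠ -j) :
    x i ≠ x j ∧ x i ≠ -(x j) := by
  constructor
  · intro h; exact hij (x.injective h)
  · intro h
    rw [← hx.1 j] at h
    exact hij2 (x.injective h)

lemma stepEq {n k : ℕ} (hk1 : 1 ≤ k) (hk : k < n) (x : Perm ℤ) :
    NN n (x * simpleRefl n k) + cc (x k) (x ((k:ℤ)+1))
      = NN n x + cc (x ((k:ℤ)+1)) (x k) := by
  have hs : ∀ i : ℤ, 1 ≤ i → (x * simpleRefl n k) i = x (sw k i) := by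
    intro i hi
    simp only [Perm.mul_apply, sR_eval_lt hk1 hk, sw]
    congr 1
    split_ifs <;> omega
  have h := REST x (x * simpleRefl n k) (k:ℤ) (by exact_mod_cast hk1) (by exact_mod_cast hk)
    (fun i j hi1 hi2 hj1 hj2 hij hne => by
      rw [hs i hi1, hs j hj1])
  rw [hs k (by exact_mod_cast hk1), hs ((k:ℤ)+1) (by omega)] at h
  have e1 : sw (k:ℤ) k = (k:ℤ)+1 := by unfold sw; split_ifs <;> omega
  have e2 : sw (k:ℤ) ((k:ℤ)+1) = (k:ℤ) := by unfold sw; split_ifs <;> omega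
  rw [e1, e2] at h
  exact h

lemma stepEqN {n : ℕ} (hn : 4 ≤ n) (x : Perm ℤ) (hx : SP n x) :
    NN n (x * simpleRefl n n) + cc (x ((n:ℤ)-1)) (x (n:ℤ))
      = NN n x + cc (-(x (n:ℤ))) (-(x ((n:ℤ)-1))) := by
  have hn2 : (2:ℕ) ≤ n := by omega
  have hnz : ∀ i : ℤ, 1 ≤ i → x i ≠ 0 := fun i hi => SP_ne_zero hx (by omega)
  have harg1 : simpleRefl n n ((n:ℤ)-1) = -(n:ℤ) := by
    rw [sR_eval_top hn2]; split_ifs <;> omega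
  have harg2 : simpleRefl n n (n:ℤ) = -((n:ℤ)-1) := by
    rw [sR_eval_top hn2]; split_ifs <;> omega
  have hargo : ∀ i : ℤ, 1 ≤ i → i ≤ (n:ℤ)-2 → simpleRefl n n i = i := by
    intro i h1 h2; rw [sR_eval_top hn2]; split_ifs <;> omega
  have hv1 : (x * simpleRefl n n) ((n:ℤ)-1) = -(x (n:ℤ)) := by
    simp only [Perm.mul_apply, harg1, hx.1]
  have hv2 : (x * simpleRefl n n) (n:ℤ) = -(x ((n:ℤ)-1)) := by
    simp only [Perm.mul_apply, harg2, hx.1]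
  have hvo : ∀ i : ℤ, 1 ≤ i → i ≤ (n:ℤ)-2 → (x * simpleRefl n n) i = x i := by
    intro i h1 h2
    simp only [Perm.mul_apply, hargo i h1 h2]
  have hsw1 : sw ((n:ℤ)-1) ((n:ℤ)-1) = (n:ℤ) := by unfold sw; split_ifs <;> omega
  have hsw2 : sw ((n:ℤ)-1) (n:ℤ) = (n:ℤ)-1 := by unfold sw; split_ifs <;> omega
  have hswo : ∀ i : ℤ, 1 ≤ i → i ≤ (n:ℤ)-2 → sw ((n:ℤ)-1) i = i := by
    intro i h1 h2; unfold sw; split_ifs <;> omega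
  have h := REST (n := n) x (x * simpleRefl n n) ((n:ℤ)-1) (by omega) (by omega)
    (fun i j hi1 hi2 hj1 hj2 hij hne => by
      have hi' : i ≤ (n:ℤ)-2 ∨ i = (n:ℤ)-1 := by omega
      rcases hi' with hi' | hi'
      · rw [hvo i hi1 hi', hswo i hi1 hi']
        have hj' : j ≤ (n:ℤ)-2 ∨ j = (n:ℤ)-1 ∨ j = (n:ℤ) := by omega
        rcases hj' with hj' | hj' | hj'
        · rw [hvo j hj1 hj', hswo j hj1 hj']
        · rw [hj', hv1, hsw1]
          exact cc_neg_right (x i) (x (n:ℤ)) (hnz i hi1) (hnz (n:ℤ) (by omega))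
        · rw [hj', hv2, hsw2]
          exact cc_neg_right (x i) (x ((n:ℤ)-1)) (hnz i hi1) (hnz ((n:ℤ)-1) (by omega))
      · exfalso; omega)
  rw [show (n:ℤ)-1+1 = (n:ℤ) by ring] at h
  rw [hv1, hv2] at h
  exact h

lemma stepPM {n k : ℕ} (hn : 4 ≤ n) (hk1 : 1 ≤ k) (hk : k ≤ n) (x : Perm ℤ) (hx : SP n x) :
    NN n (x * simpleRefl n k) = NN n x + 1 ∨ NN n x = NN n (x * simpleRefl n k) + 1 := by
  rcases lt_or_eq_of_le hk with h | h
  · have hstep := stepEq hk1 h x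
    have hflip := cc_flip (x k) (x ((k:ℤ)+1)) (SP_ne_zero hx (by positivity))
      (SP_ne_zero hx (by positivity))
      (SP_inj_vals hx (by omega) (by omega)).1 (SP_inj_vals hx (by omega) (by omega)).2
    omega
  · subst h
    have hstep := stepEqN hn x hx
    have hb0 : x (k:ℤ) ≠ 0 := SP_ne_zero hx (by omega)
    have ha0 : x ((k:ℤ)-1) ≠ 0 := SP_ne_zero hx (by omega)
    have hne : x ((k:ℤ)-1) ≠ x (k:ℤ) ∧ x ((k:ℤ)-1) ≠ -(x (k:ℤ)) :=
      SP_inj_vals hx (by omega) (by omega)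
    have h1 : cc (-(x (k:ℤ))) (-(x ((k:ℤ)-1))) = cc (-(x (k:ℤ))) (x ((k:ℤ)-1)) :=
      cc_neg_right _ _ (neg_ne_zero.mpr hb0) ha0
    have h2 : cc (x ((k:ℤ)-1)) (x (k:ℤ)) = cc (x ((k:ℤ)-1)) (-(x (k:ℤ))) :=
      (cc_neg_right _ _ ha0 hb0).symm
    have hflip := cc_flip (x ((k:ℤ)-1)) (-(x (k:ℤ))) ha0 (neg_ne_zero.mpr hb0)
      hne.2 (by rw [neg_neg]; exact hne.1)
    omega

lemma wordProd_nil (n : ℕ) : wordProd n [] = 1 := rfl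

lemma wordProd_cons (n k : ℕ) (L : List ℕ) :
    wordProd n (k :: L) = simpleRefl n k * wordProd n L := by
  simp [wordProd]

lemma wordProd_append (n : ℕ) (L M : List ℕ) :
    wordProd n (L ++ M) = wordProd n L * wordProd n M := by
  simp [wordProd]

lemma wordProd_singleton (n k : ℕ) : wordProd n [k] = simpleRefl n k := by
  simp [wordProd]

lemma SP_wordProd {n : ℕ} (hn : 2 ≤ n) {L : List ℕ} (hL : IsWord n L) :
    SP n (wordProd n L) := by
  induction L with
  | nil => exact SP_one n
  | cons k L ih =>
    rw [wordProd_cons]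
    exact SP_mul (SP_sR (hL k (by simp)).1 (hL k (by simp)).2 hn)
      (ih fun i hi => hL i (by simp [hi]))

lemma NN_one (n : ℕ) : NN n 1 = 0 := by
  apply Finset.sum_eq_zero
  intro p hp
  simp only [Finset.mem_product, Finset.mem_Icc] at hp
  simp only [Perm.one_apply]
  unfold cc
  split_ifs <;> omega

lemma NN_le_len {n : ℕ} (hn : 4 ≤ n) (L : List ℕ) (hL : IsWord n L) :
    NN n (wordProd n L) ≤ L.length := by
  induction L using List.reverseRecOn with
  | nil => rw [wordProd_nil, NN_one]; exact Nat.zero_le _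
  | append_singleton M k ih =>
    have hM : IsWord n M := fun i hi => hL i (by simp [hi])
    have hk := hL k (by simp)
    rw [wordProd_append, wordProd_singleton]
    have := stepPM hn hk.1 hk.2 (wordProd n M) (SP_wordProd (by omega) hM)
    have := ih hM
    simp only [List.length_append, List.length_singleton]
    omega

noncomputable def negC (n : ℕ) (x : Perm ℤ) : ℕ :=
  ((Finset.Icc (1:ℤ) (n:ℤ)).filter fun i => x i < 0).card

lemma negC_sum (n : ℕ) (x : Perm ℤ) :
    negC n x = ∑ i ∈ Finset.Icc (1:ℤ) (n:ℤ), if x i < 0 then 1 else 0 := by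
  rw [negC, Finset.card_filter]

lemma sum_sw {n : ℕ} (m : ℤ) (hm1 : 1 ≤ m) (hm2 : m+1 ≤ (n:ℤ)) (g : ℤ → ℕ) :
    ∑ i ∈ Finset.Icc (1:ℤ) (n:ℤ), g (sw m i) = ∑ i ∈ Finset.Icc (1:ℤ) (n:ℤ), g i := by
  apply Finset.sum_nbij' (sw m) (sw m)
  · intro a ha
    simp only [Finset.mem_Icc] at ha ⊢
    unfold sw; split_ifs <;> omega
  · intro a ha
    simp only [Finset.mem_Icc] at ha ⊢
    unfold sw; split_ifs <;> omega
  · intro a ha; unfold sw; split_ifs <;> omega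
  · intro a ha; unfold sw; split_ifs <;> omega
  · intro a ha; rfl

lemma mul_sR_apply_lt {n k : ℕ} (hk1 : 1 ≤ k) (hk : k < n) (x : Perm ℤ) (i : ℤ) (hi : 1 ≤ i) :
    (x * simpleRefl n k) i = x (sw (k:ℤ) i) := by
  simp only [Perm.mul_apply, sR_eval_lt hk1 hk, sw]
  congr 1
  split_ifs <;> omega

lemma negC_mul_sR {n k : ℕ} (hn : 4 ≤ n) (hk1 : 1 ≤ k) (hk : k ≤ n) (x : Perm ℤ) (hx : SP n x) :
    (Even (negC n (x * simpleRefl n k)) ↔ Even (negC n x)) := by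
  rcases lt_or_eq_of_le hk with h | h
  · have : negC n (x * simpleRefl n k) = negC n x := by
      rw [negC_sum, negC_sum, ← sum_sw (n := n) (k:ℤ) (by exact_mod_cast hk1) (by exact_mod_cast h)
        (fun i => if x i < 0 then 1 else 0)]
      apply Finset.sum_congr rfl
      intro i hi
      simp only [Finset.mem_Icc] at hi
      rw [mul_sR_apply_lt hk1 h x i hi.1]
    rw [this]
  · subst h
    have hn2 : (2:ℕ) ≤ k := by omega
    have harg1 : simpleRefl k k ((k:ℤ)-1) = -(k:ℤ) := by
      rw [sR_eval_top hn2]; split_ifs <;> omega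
    have harg2 : simpleRefl k k (k:ℤ) = -((k:ℤ)-1) := by
      rw [sR_eval_top hn2]; split_ifs <;> omega
    have hargo : ∀ i : ℤ, 1 ≤ i → i ≤ (k:ℤ)-2 → simpleRefl k k i = i := by
      intro i h1 h2; rw [sR_eval_top hn2]; split_ifs <;> omega
    set t : ℤ → ℕ := fun i => if x i < 0 then 1 else 0 with ht
    set t' : ℤ → ℕ := fun i => if (x * simpleRefl k k) i < 0 then 1 else 0 with ht'
    have hq0 : (k:ℤ) ∈ Finset.Icc (1:ℤ) (k:ℤ) := by simp only [Finset.mem_Icc]; omega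
    have hq1 : (k:ℤ)-1 ∈ (Finset.Icc (1:ℤ) (k:ℤ)).erase (k:ℤ) := by
      simp only [Finset.mem_erase, Finset.mem_Icc]; omega
    have key : ∑ i ∈ ((Finset.Icc (1:ℤ) (k:ℤ)).erase (k:ℤ)).erase ((k:ℤ)-1), t' i
        = ∑ i ∈ ((Finset.Icc (1:ℤ) (k:ℤ)).erase (k:ℤ)).erase ((k:ℤ)-1), t i := by
      apply Finset.sum_congr rfl
      intro i hi
      simp only [Finset.mem_erase, Finset.mem_Icc] at hi
      simp only [ht, ht', Perm.mul_apply, hargo i hi.2.2.1 (by omega)]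
    have e1 : negC k (x * simpleRefl k k)
        = t' (k:ℤ) + (t' ((k:ℤ)-1) + ∑ i ∈ ((Finset.Icc (1:ℤ) (k:ℤ)).erase (k:ℤ)).erase ((k:ℤ)-1), t' i) := by
      rw [negC_sum, ← Finset.add_sum_erase _ t' hq0, ← Finset.add_sum_erase _ t' hq1]
    have e2 : negC k x
        = t (k:ℤ) + (t ((k:ℤ)-1) + ∑ i ∈ ((Finset.Icc (1:ℤ) (k:ℤ)).erase (k:ℤ)).erase ((k:ℤ)-1), t i) := by
      rw [negC_sum, ← Finset.add_sum_erase _ t hq0, ← Finset.add_sum_erase _ t hq1]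
    have hx1 : x ((k:ℤ)-1) ≠ 0 := SP_ne_zero hx (by omega)
    have hx2 : x (k:ℤ) ≠ 0 := SP_ne_zero hx (by omega)
    have v1 : t' ((k:ℤ)-1) + t (k:ℤ) = 1 := by
      simp only [ht, ht', Perm.mul_apply, harg1, hx.1]
      split_ifs <;> omega
    have v2 : t' (k:ℤ) + t ((k:ℤ)-1) = 1 := by
      simp only [ht, ht', Perm.mul_apply, harg2, hx.1]
      split_ifs <;> omega
    rw [e1, e2, key]
    simp only [Nat.even_iff]
    omega

lemma negC_mul_word {n : ℕ} (hn : 4 ≤ n) (x : Perm ℤ) (hx : SP n x) (L : List ℕ)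
    (hL : IsWord n L) : (Even (negC n (x * wordProd n L)) ↔ Even (negC n x)) := by
  induction L using List.reverseRecOn with
  | nil => rw [wordProd_nil, mul_one]
  | append_singleton M k ih =>
    have hM : IsWord n M := fun i hi => hL i (by simp [hi])
    have hk := hL k (by simp)
    rw [wordProd_append, wordProd_singleton, ← mul_assoc]
    rw [negC_mul_sR hn hk.1 hk.2 _ (SP_mul hx (SP_wordProd (by omega) hM))]
    exact ih hM

lemma negC_inv {n : ℕ} (x : Perm ℤ) (hx : SP n x) : negC n x⁻¹ = negC n x := by
  unfold negC
  apply Finset.card_nbij' (fun j => -(x⁻¹ j)) (fun i => -(x i))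
  · intro j hj
    simp only [Finset.mem_coe, Finset.mem_filter, Finset.mem_Icc] at hj ⊢
    obtain ⟨⟨h1, h2⟩, h3⟩ := hj
    have habs : |x⁻¹ j| ≤ n := SP_abs_le (SP_inv hx) (by rw [abs_of_pos (by omega : (0:ℤ) < j)]; omega)
    rcases abs_cases (x⁻¹ j) with ⟨a1, a2⟩ | ⟨a1, a2⟩
    all_goals refine ⟨⟨by omega, by omega⟩, ?_⟩
    all_goals rw [hx.1, Perm.coe_inv, apply_symm_apply]; omega
  · intro i hi
    simp only [Finset.mem_coe, Finset.mem_filter, Finset.mem_Icc] at hi ⊢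
    obtain ⟨⟨h1, h2⟩, h3⟩ := hi
    have habs : |x i| ≤ n := SP_abs_le hx (by rw [abs_of_pos (by omega : (0:ℤ) < i)]; omega)
    rcases abs_cases (x i) with ⟨a1, a2⟩ | ⟨a1, a2⟩
    all_goals refine ⟨⟨by omega, by omega⟩, ?_⟩
    all_goals rw [(SP_inv hx).1]; simp only [Perm.coe_inv, symm_apply_apply]; omega
  · intro j hj
    beta_reduce
    rw [hx.1]
    simp [Perm.coe_inv, apply_symm_apply]
  · intro i hi
    beta_reduce
    rw [(SP_inv hx).1]
    simp [Perm.coe_inv, symm_apply_apply]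

lemma eq_one_of_window {n : ℕ} (x : Perm ℤ) (hx : SP n x)
    (h : ∀ i : ℤ, 1 ≤ i → i ≤ (n:ℤ) → x i = i) : x = 1 := by
  have hpos : ∀ i : ℤ, 0 < i → x i = i := by
    intro i hi
    rcases le_or_gt i (n:ℤ) with h2 | h2
    · exact h i (by omega) h2
    · exact hx.2 i (by rw [abs_of_pos hi]; omega)
  ext i
  simp only [Perm.one_apply]
  rcases lt_trichotomy i 0 with hi | hi | hi
  · have h4 : x i = -(x (-i)) := by rw [← hx.1]; simp
    have := hpos (-i) (by omega)
    omega
  · subst hi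
    have : x (-(0:ℤ)) = -(x 0) := hx.1 0
    simp at this
    omega
  · exact hpos i hi

lemma descent_exists {n : ℕ} (hn : 4 ≤ n) (z : Perm ℤ) (hz : SP n z)
    (hev : Even (negC n z)) (hne : z ≠ 1) :
    ∃ k : ℕ, 1 ≤ k ∧ k ≤ n ∧ NN n z = NN n (z * simpleRefl n k) + 1 := by
  by_contra hcon
  push_neg at hcon
  have hstep : ∀ k : ℕ, 1 ≤ k → k ≤ n → NN n (z * simpleRefl n k) = NN n z + 1 := by
    intro k h1 h2
    rcases stepPM hn h1 h2 z hz with h | h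
    · exact h
    · exact absurd h (hcon k h1 h2)
  have hlt : ∀ k : ℤ, 1 ≤ k → k ≤ (n:ℤ)-1 →
      ((z k < 0 → z (k+1) < 0) ∧
        ((0 < z k ∧ 0 < z (k+1)) ∨ (z k < 0 ∧ z (k+1) < 0) → z k < z (k+1))) := by
    intro k h1 h2
    have e := stepEq (n := n) (k := k.toNat) (by omega) (by omega) z
    rw [show ((k.toNat : ℕ) : ℤ) = k by omega] at e
    have e2 := hstep k.toNat (by omega) (by omega)
    have hcc : cc (z (k+1)) (z k) = cc (z k) (z (k+1)) + 1 := by omega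
    have hz1 : z k ≠ 0 := SP_ne_zero hz (by omega)
    have hz2 : z (k+1) ≠ 0 := SP_ne_zero hz (by omega)
    revert hcc
    unfold cc
    split_ifs <;> (intro hcc; constructor <;> (intro hs; omega))
  have hNn : ¬(z ((n:ℤ)-1) < 0 ∧ z (n:ℤ) < 0) := by
    have e := stepEqN hn z hz
    have e2 := hstep n (by omega) le_rfl
    have hcc : cc (-(z (n:ℤ))) (-(z ((n:ℤ)-1))) = cc (z ((n:ℤ)-1)) (z (n:ℤ)) + 1 := by omega
    have hz1 : z ((n:ℤ)-1) ≠ 0 := SP_ne_zero hz (by omega)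
    have hz2 : z (n:ℤ) ≠ 0 := SP_ne_zero hz (by omega)
    revert hcc
    unfold cc
    split_ifs <;> (intro hcc; intro hs; omega)
  have hnz : ∀ i : ℤ, 1 ≤ i → i ≤ (n:ℤ) → z i ≠ 0 := fun i h1 h2 => SP_ne_zero hz (by omega)
  by_cases hallpos : ∀ i : ℤ, 1 ≤ i → i ≤ (n:ℤ) → 0 < z i
  · -- all positive: z = 1, contradiction
    have hup : ∀ m : ℕ, 1 ≤ m → m ≤ n → (m:ℤ) ≤ z (m:ℤ) := by
      intro m hm
      induction m, hm using Nat.le_induction with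
      | base => intro _; exact hallpos 1 le_rfl (by omega)
      | succ m hm ih =>
        intro hmn
        have h1 := ih (by omega)
        have h2 := (hlt (m:ℤ) (by omega) (by omega)).2
          (Or.inl ⟨hallpos _ (by omega) (by omega), hallpos _ (by omega) (by push_cast; omega)⟩)
        push_cast
        push_cast at h2
        omega
    have hdown : ∀ m : ℕ, (m:ℤ) ≤ (n:ℤ)-1 → z ((n:ℤ) - m) ≤ (n:ℤ) - m := by
      intro m
      induction m with
      | zero =>
        intro _
        have habs := SP_abs_le hz (i := (n:ℤ)) (by rw [abs_of_pos (by omega : (0:ℤ) < (n:ℤ))])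
        simp only [Nat.cast_zero, sub_zero]
        rcases abs_cases (z (n:ℤ)) with ⟨a1, a2⟩ | ⟨a1, a2⟩ <;> omega
      | succ m ih =>
        intro hm
        have h1 := ih (by push_cast; push_cast at hm; omega)
        have h2 := (hlt ((n:ℤ) - (m+1)) (by push_cast at hm ⊢; omega) (by push_cast at hm ⊢; omega)).2
          (Or.inl ⟨hallpos _ (by push_cast at hm ⊢; omega) (by push_cast at hm ⊢; omega),
            hallpos _ (by push_cast at hm ⊢; omega) (by push_cast at hm ⊢; omega)⟩)
        push_cast at hm h2 ⊢
        rw [show (n:ℤ) - (m+1) + 1 = (n:ℤ) - m by ring] at h2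
        omega
    have hid : ∀ i : ℤ, 1 ≤ i → i ≤ (n:ℤ) → z i = i := by
      intro i h1 h2
      have hu := hup i.toNat (by omega) (by omega)
      rw [show ((i.toNat : ℕ) : ℤ) = i by omega] at hu
      have hd := hdown ((n:ℤ) - i).toNat (by omega)
      rw [show (((((n:ℤ) - i).toNat) : ℕ) : ℤ) = (n:ℤ) - i by omega] at hd
      rw [show (n:ℤ) - ((n:ℤ) - i) = i by ring] at hd
      omega
    exact hne (eq_one_of_window z hz hid)
  · push_neg at hallpos
    obtain ⟨i0, hi1, hi2, hi3⟩ := hallpos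
    have hi3 : z i0 < 0 := by have := hnz i0 hi1 hi2; omega
    have prop : ∀ m : ℕ, ∀ k : ℤ, 1 ≤ k → k + m ≤ (n:ℤ) → z k < 0 → z (k + m) < 0 := by
      intro m
      induction m with
      | zero => intro k _ _ h; simpa using h
      | succ m ih =>
        intro k h1 h2 h3
        push_cast at h2 ⊢
        have := ih k h1 (by omega) h3
        have h4 := (hlt (k + m) (by omega) (by omega)).1 this
        rw [show k + (↑m + 1) = k + ↑m + 1 by ring]
        exact h4
    have hzn : z (n:ℤ) < 0 := by
      have := prop ((n:ℤ) - i0).toNat i0 hi1 (by omega) hi3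
      rw [show i0 + (((n:ℤ) - i0).toNat : ℤ) = (n:ℤ) by omega] at this
      exact this
    have hzn1 : 0 < z ((n:ℤ)-1) := by
      have := hnz ((n:ℤ)-1) (by omega) (by omega)
      by_contra hcon2
      exact hNn ⟨by omega, hzn⟩
    have hposlt : ∀ i : ℤ, 1 ≤ i → i ≤ (n:ℤ)-1 → 0 < z i := by
      intro i h1 h2
      by_contra hc
      have hzi : z i < 0 := by have := hnz i h1 (by omega); omega
      have := prop ((n:ℤ)-1-i).toNat i h1 (by omega) hzi
      rw [show i + ((((n:ℤ)-1-i).toNat : ℕ) : ℤ) = (n:ℤ)-1 by omega] at this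
      omega
    have hfil : ((Finset.Icc (1:ℤ) (n:ℤ)).filter fun i => z i < 0) = {(n:ℤ)} := by
      ext i
      simp only [Finset.mem_filter, Finset.mem_Icc, Finset.mem_singleton]
      constructor
      · rintro ⟨⟨h1, h2⟩, h3⟩
        by_contra hc
        exact absurd h3 (by have := hposlt i h1 (by omega); omega)
      · intro h
        subst h
        exact ⟨⟨by omega, le_rfl⟩, hzn⟩
    rw [negC, hfil] at hev
    simp at hev

lemma word_of_NN {n : ℕ} (hn : 4 ≤ n) : ∀ (N : ℕ) (z : Perm ℤ), SP n z → Even (negC n z) →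
    NN n z = N → ∃ L, IsWord n L ∧ L.length = N ∧ wordProd n L = z := by
  intro N
  induction N using Nat.strong_induction_on with
  | _ N ih =>
    intro z hz hev hNz
    by_cases hone : z = 1
    · subst hone
      rw [NN_one] at hNz
      refine ⟨[], fun i hi => by simp at hi, by simpa using hNz, wordProd_nil n⟩
    · obtain ⟨k, hk1, hk2, hkd⟩ := descent_exists hn z hz hev hone
      have hz' : SP n (z * simpleRefl n k) := SP_mul hz (SP_sR hk1 hk2 (by omega))
      have hev' : Even (negC n (z * simpleRefl n k)) :=
        (negC_mul_sR hn hk1 hk2 z hz).mpr hev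
      have hlt : NN n (z * simpleRefl n k) < N := by omega
      obtain ⟨L, hL, hlen, hprod⟩ := ih _ hlt _ hz' hev' rfl
      refine ⟨L ++ [k], ?_, ?_, ?_⟩
      · intro i hi
        rcases List.mem_append.mp hi with h | h
        · exact hL i h
        · simp at h; subst h; exact ⟨hk1, hk2⟩
      · simp only [List.length_append, List.length_singleton, hlen]; omega
      · rw [wordProd_append, hprod, wordProd_singleton, mul_assoc,
          sR_sq hk1 hk2 (by omega), mul_one]

lemma uWord_eq (n : ℕ) : uWordPlus n n = n :: (List.range (n - 2)).reverse.map (· + 1) := by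
  unfold uWordPlus
  simp [Nat.sub_self]

lemma cyc_eval {n : ℕ} (hn : 4 ≤ n) : ∀ (m : ℕ), m + 1 ≤ n → ∀ i : ℤ,
    wordProd n ((List.range m).reverse.map (· + 1)) i =
      if i = 1 then (m:ℤ)+1 else if 2 ≤ i ∧ i ≤ (m:ℤ)+1 then i - 1
      else if i = -1 then -((m:ℤ)+1) else if -(m:ℤ)-1 ≤ i ∧ i ≤ -2 then i + 1 else i := by
  intro m
  induction m with
  | zero =>
    intro _ i
    rw [List.range_zero]
    simp only [List.reverse_nil, List.map_nil, wordProd_nil, Perm.one_apply, Nat.cast_zero]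
    split_ifs <;> omega
  | succ m ih =>
    intro hm i
    have hlist : (List.range (m+1)).reverse.map (· + 1) = (m+1) :: (List.range m).reverse.map (· + 1) := by
      rw [List.range_succ, List.reverse_append]
      simp
    rw [hlist, wordProd_cons, Perm.mul_apply, ih (by omega) i,
      sR_eval_lt (by omega) (by omega)]
    push_cast
    split_ifs <;> omega

lemma u_eval {n : ℕ} (hn : 4 ≤ n) (i : ℤ) :
    wordProd n (uWordPlus n n) i =
      if i = 1 then -(n:ℤ) else if 2 ≤ i ∧ i ≤ (n:ℤ)-1 then i - 1
      else if i = (n:ℤ) then -(n:ℤ)+1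
      else if i = -1 then (n:ℤ) else if -(n:ℤ)+1 ≤ i ∧ i ≤ -2 then i + 1
      else if i = -(n:ℤ) then (n:ℤ)-1 else i := by
  rw [uWord_eq, wordProd_cons, Perm.mul_apply, cyc_eval hn (n-2) (by omega) i,
    sR_eval_top (by omega)]
  have hc : ((n - 2 : ℕ) : ℤ) = (n:ℤ) - 2 := by omega
  rw [hc]
  split_ifs <;> omega

set_option maxHeartbeats 2000000 in
lemma g0_eval {n : ℕ} (hn : 4 ≤ n) (i : ℤ) :
    (wordProd n (uWordPlus n n) * simpleRefl n 1) i =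
      if i = 1 then 1 else if i = 2 then -(n:ℤ) else if 3 ≤ i ∧ i ≤ (n:ℤ)-1 then i - 1
      else if i = (n:ℤ) then -(n:ℤ)+1
      else if i = -1 then -1 else if i = -2 then (n:ℤ)
      else if -(n:ℤ)+1 ≤ i ∧ i ≤ -3 then i + 1
      else if i = -(n:ℤ) then (n:ℤ)-1 else i := by
  rw [Perm.mul_apply, sR_eval_lt (le_refl 1) (by omega), u_eval hn]
  push_cast
  split_ifs <;> first | contradiction | omega

lemma cc_one (b : ℤ) (hb : b ≠ 0) : cc 1 b = 0 := by
  unfold cc; split_ifs <;> omega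

lemma cc_two (b : ℤ) (hb : 3 ≤ |b|) : cc 2 b = 0 := by
  rcases abs_cases b with ⟨a1,a2⟩|⟨a1,a2⟩ <;> (unfold cc; split_ifs <;> omega)

lemma cc_negn {n : ℕ} (hn : 4 ≤ n) (b : ℤ) (hb : b ≠ 0) (h1 : -(n:ℤ) < b) (h2 : b < (n:ℤ)) :
    cc (-(n:ℤ)) b = 1 := by
  unfold cc; split_ifs <;> omega

set_option maxHeartbeats 1000000 in
lemma g0_midd {n : ℕ} (hn : 4 ≤ n) (a : ℤ) (h1 : 3 ≤ |a|) (h2 : |a| ≤ (n:ℤ)) :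
    (wordProd n (uWordPlus n n) * simpleRefl n 1) a =
      if a = (n:ℤ) then -(n:ℤ)+1 else if a = -(n:ℤ) then (n:ℤ)-1
      else if 0 < a then a - 1 else a + 1 := by
  rw [g0_eval hn]
  rcases abs_cases a with ⟨a1,a2⟩|⟨a1,a2⟩ <;> (split_ifs <;> omega)

lemma g0_cases {n : ℕ} (hn : 4 ≤ n) (a : ℤ) (h1 : 3 ≤ |a|) (h2 : |a| ≤ (n:ℤ)) :
    (3 ≤ a ∧ a ≤ (n:ℤ)-1 ∧ (wordProd n (uWordPlus n n) * simpleRefl n 1) a = a - 1) ∨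
    (a = (n:ℤ) ∧ (wordProd n (uWordPlus n n) * simpleRefl n 1) a = -(n:ℤ)+1) ∨
    (-(n:ℤ)+1 ≤ a ∧ a ≤ -3 ∧ (wordProd n (uWordPlus n n) * simpleRefl n 1) a = a + 1) ∨
    (a = -(n:ℤ) ∧ (wordProd n (uWordPlus n n) * simpleRefl n 1) a = (n:ℤ)-1) := by
  rw [g0_midd hn a h1 h2]
  rcases abs_cases a with ⟨a1,a2⟩|⟨a1,a2⟩ <;> (split_ifs <;> omega)

lemma g0_rng {n : ℕ} (hn : 4 ≤ n) (a : ℤ) (h1 : 3 ≤ |a|) (h2 : |a| ≤ (n:ℤ)) :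
    (wordProd n (uWordPlus n n) * simpleRefl n 1) a ≠ 0 ∧
      -(n:ℤ) < (wordProd n (uWordPlus n n) * simpleRefl n 1) a ∧
      (wordProd n (uWordPlus n n) * simpleRefl n 1) a < (n:ℤ) := by
  rcases g0_cases hn a h1 h2 with ⟨u1,u2,e⟩|⟨u1,e⟩|⟨u1,u2,e⟩|⟨u1,e⟩ <;> rw [e] <;>
    refine ⟨by omega, by omega, by omega⟩

set_option maxHeartbeats 4000000 in
lemma CG {n : ℕ} (hn : 4 ≤ n) (a b : ℤ) (ha1 : 3 ≤ |a|) (ha2 : |a| ≤ (n:ℤ))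
    (hb1 : 3 ≤ |b|) (hb2 : |b| ≤ (n:ℤ)) (hab : |a| ≠ |b|) :
    cc ((wordProd n (uWordPlus n n) * simpleRefl n 1) a)
       ((wordProd n (uWordPlus n n) * simpleRefl n 1) b) = cc a b := by
  have hab2 : a ≠ b ∧ a ≠ -b := by
    rcases abs_cases a with ⟨a1,a2⟩|⟨a1,a2⟩ <;> rcases abs_cases b with ⟨b1,b2⟩|⟨b1,b2⟩ <;>
      constructor <;> omega
  rcases g0_cases hn a ha1 ha2 with ⟨u1,u2,e⟩|⟨u1,e⟩|⟨u1,u2,e⟩|⟨u1,e⟩ <;>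
    rcases g0_cases hn b hb1 hb2 with ⟨v1,v2,f⟩|⟨v1,f⟩|⟨v1,v2,f⟩|⟨v1,f⟩ <;>
    rw [e, f] <;> (unfold cc; split_ifs <;> omega)

lemma g0_one {n : ℕ} (hn : 4 ≤ n) : (wordProd n (uWordPlus n n) * simpleRefl n 1) 1 = 1 := by
  rw [g0_eval hn]; split_ifs <;> omega

lemma g0_two {n : ℕ} (hn : 4 ≤ n) : (wordProd n (uWordPlus n n) * simpleRefl n 1) 2 = -(n:ℤ) := by
  rw [g0_eval hn]; split_ifs <;> omega

lemma IsWord_uWord {n : ℕ} (hn : 4 ≤ n) : IsWord n (uWordPlus n n) := by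
  intro i hi
  rw [uWord_eq] at hi
  simp only [List.mem_cons, List.mem_map, List.mem_reverse, List.mem_range] at hi
  rcases hi with h | ⟨t, ht, rfl⟩ <;> omega

lemma SP_u {n : ℕ} (hn : 4 ≤ n) : SP n (wordProd n (uWordPlus n n)) :=
  SP_wordProd (by omega) (IsWord_uWord hn)

lemma SP_g0 {n : ℕ} (hn : 4 ≤ n) : SP n (wordProd n (uWordPlus n n) * simpleRefl n 1) :=
  SP_mul (SP_u hn) (SP_sR le_rfl (by omega) (by omega))

lemma NN_g0_mul {n : ℕ} (hn : 4 ≤ n) (y : Perm ℤ) (hy : SP n y) (hy1 : y 1 = 1)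
    (hy2 : y 2 = 2) :
    NN n (wordProd n (uWordPlus n n) * simpleRefl n 1 * y) = (n - 2) + NN n y := by
  have hyodd1 : y (-1) = -1 := by rw [show (-1 : ℤ) = -(1:ℤ) by ring, hy.1, hy1]
  have hyodd2 : y (-2) = -2 := by rw [show (-2 : ℤ) = -(2:ℤ) by ring, hy.1, hy2]
  have hyv : ∀ i : ℤ, 3 ≤ i → i ≤ (n:ℤ) → 3 ≤ |y i| ∧ |y i| ≤ (n:ℤ) := by
    intro i h1 h2
    have hle : |y i| ≤ (n:ℤ) := SP_abs_le hy (by rw [abs_of_pos (by omega)]; omega)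
    have h0 : y i ≠ 0 := SP_ne_zero hy (by omega)
    have hne1 : y i ≠ 1 := by intro h; have := y.injective (h.trans hy1.symm); omega
    have hne2 : y i ≠ 2 := by intro h; have := y.injective (h.trans hy2.symm); omega
    have hne3 : y i ≠ -1 := by intro h; have := y.injective (h.trans hyodd1.symm); omega
    have hne4 : y i ≠ -2 := by intro h; have := y.injective (h.trans hyodd2.symm); omega
    rcases abs_cases (y i) with ⟨a1,a2⟩|⟨a1,a2⟩ <;> omega
  have hpoint : ∀ p : ℤ × ℤ, p ∈ (Finset.Icc (1:ℤ) (n:ℤ)) ×ˢ (Finset.Icc (1:ℤ) (n:ℤ)) →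
      (if p.1 < p.2 then
        cc ((wordProd n (uWordPlus n n) * simpleRefl n 1 * y) p.1)
           ((wordProd n (uWordPlus n n) * simpleRefl n 1 * y) p.2) else 0)
      = (if p.1 < p.2 then cc (y p.1) (y p.2) else 0)
        + (if p.1 = 2 ∧ p.1 < p.2 then 1 else 0) := by
    intro p hp
    simp only [Finset.mem_product, Finset.mem_Icc] at hp
    obtain ⟨⟨h11, h12⟩, h21, h22⟩ := hp
    by_cases hlt : p.1 < p.2
    · rw [if_pos hlt, if_pos hlt]
      have happ : ∀ i : ℤ, (wordProd n (uWordPlus n n) * simpleRefl n 1 * y) i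
          = (wordProd n (uWordPlus n n) * simpleRefl n 1) (y i) := fun i => rfl
      rw [happ, happ]
      rcases show p.1 = 1 ∨ p.1 = 2 ∨ 3 ≤ p.1 by omega with h | h | h
      · rw [h, hy1, g0_one hn]
        have hyn : y p.2 ≠ 0 := SP_ne_zero hy (by omega)
        have hgn : (wordProd n (uWordPlus n n) * simpleRefl n 1) (y p.2) ≠ 0 :=
          SP_ne_zero (SP_g0 hn) hyn
        rw [cc_one _ hgn, cc_one _ hyn, if_neg (by omega)]
      · rw [h, hy2, g0_two hn]
        have hv := hyv p.2 (by omega) h22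
        have hrng := g0_rng hn (y p.2) hv.1 hv.2
        rw [cc_negn hn _ hrng.1 hrng.2.1 hrng.2.2, cc_two _ hv.1, if_pos (⟨rfl, by omega⟩ : (2:ℤ) = 2 ∧ 2 < p.2)]
      · have hv1 := hyv p.1 h h12
        have hv2 := hyv p.2 (by omega) h22
        have hinj := SP_inj_vals hy (show p.1 ≠ p.2 by omega) (show p.1 ≠ -p.2 by omega)
        have habs : |y p.1| ≠ |y p.2| := by
          rcases abs_cases (y p.1) with ⟨a1,a2⟩|⟨a1,a2⟩ <;>
            rcases abs_cases (y p.2) with ⟨b1,b2⟩|⟨b1,b2⟩ <;> omega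
        rw [CG hn _ _ hv1.1 hv1.2 hv2.1 hv2.2 habs, if_neg (by omega)]
        omega
    · rw [if_neg hlt, if_neg hlt, if_neg (by tauto)]
  have hsplit : NN n (wordProd n (uWordPlus n n) * simpleRefl n 1 * y)
      = NN n y + ∑ p ∈ (Finset.Icc (1:ℤ) (n:ℤ)) ×ˢ (Finset.Icc (1:ℤ) (n:ℤ)),
          (if p.1 = 2 ∧ p.1 < p.2 then 1 else 0) := by
    unfold NN
    rw [Finset.sum_congr rfl hpoint, Finset.sum_add_distrib]
  have hsum2 : ∑ p ∈ (Finset.Icc (1:ℤ) (n:ℤ)) ×ˢ (Finset.Icc (1:ℤ) (n:ℤ)),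
      (if p.1 = 2 ∧ p.1 < p.2 then (1:ℕ) else 0) = n - 2 := by
    rw [Finset.sum_product]
    have hrow : ∀ i ∈ Finset.Icc (1:ℤ) (n:ℤ),
        (∑ j ∈ Finset.Icc (1:ℤ) (n:ℤ), if i = 2 ∧ i < j then (1:ℕ) else 0)
          = if i = 2 then n - 2 else 0 := by
      intro i hi
      by_cases h : i = 2
      · subst h
        rw [if_pos rfl]
        have hc : ∀ j ∈ Finset.Icc (1:ℤ) (n:ℤ),
            (if (2:ℤ) = 2 ∧ 2 < j then (1:ℕ) else 0) = if 2 < j then 1 else 0 := by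
          intro j hj; simp
        rw [Finset.sum_congr rfl hc, ← Finset.card_filter]
        have : (Finset.Icc (1:ℤ) (n:ℤ)).filter (fun j => 2 < j) = Finset.Icc (3:ℤ) (n:ℤ) := by
          ext j
          simp only [Finset.mem_filter, Finset.mem_Icc]
          omega
        rw [this, Int.card_Icc]
        omega
      · rw [if_neg h]
        apply Finset.sum_eq_zero
        intro j hj
        rw [if_neg (by tauto)]
    rw [Finset.sum_congr rfl hrow, Finset.sum_ite_eq' (Finset.Icc (1:ℤ) (n:ℤ)) 2 (fun _ => n-2),
      if_pos (by simp only [Finset.mem_Icc]; omega)]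
  rw [hsplit, hsum2]
  omega

lemma NN_g0 {n : ℕ} (hn : 4 ≤ n) :
    NN n (wordProd n (uWordPlus n n) * simpleRefl n 1) = n - 2 := by
  have h := NN_g0_mul hn 1 (SP_one n) rfl rfl
  rw [mul_one, NN_one] at h
  omega

def LL (n : ℕ) : List ℕ := n :: (List.range (n-3)).reverse.map (· + 2)

lemma uWord_split {n : ℕ} (hn : 4 ≤ n) : uWordPlus n n = LL n ++ [1] := by
  rw [uWord_eq, LL, List.cons_append]
  congr 1
  rw [show n - 2 = (n - 3) + 1 by omega, List.range_succ_eq_map, List.reverse_cons,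
    List.map_append, List.map_reverse, List.map_map]
  have hfun : ((fun x => x + 1) ∘ Nat.succ) = (fun x : ℕ => x + 2) := by
    funext t
    simp [Function.comp, Nat.succ_eq_add_one]
  rw [hfun]
  simp

lemma LL_len (n : ℕ) (hn : 4 ≤ n) : (LL n).length = n - 2 := by
  simp [LL]
  omega

lemma IsWord_LL {n : ℕ} (hn : 4 ≤ n) : IsWord n (LL n) := by
  intro i hi
  simp only [LL, List.mem_cons, List.mem_map, List.mem_reverse, List.mem_range] at hi
  rcases hi with h | ⟨t, ht, rfl⟩ <;> omega

lemma g0_eq_LL {n : ℕ} (hn : 4 ≤ n) :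
    wordProd n (uWordPlus n n) * simpleRefl n 1 = wordProd n (LL n) := by
  conv_lhs => rw [uWord_split hn]
  rw [wordProd_append, wordProd_singleton, mul_assoc, sR_sq le_rfl (by omega) (by omega),
    mul_one]

lemma weylLength_of {n : ℕ} (hn4 : 4 ≤ n) (x : Perm ℤ) (L : List ℕ) (hL : IsWord n L)
    (hprod : wordProd n L = x) (hNN : NN n x = L.length) : IsReducedWord n x L := by
  refine ⟨hL, hprod, ?_⟩
  have hmem : L.length ∈ {l | ∃ L' : List ℕ, IsWord n L' ∧ L'.length = l ∧ wordProd n L' = x} :=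
    ⟨L, hL, rfl, hprod⟩
  have hle : weylLength n x ≤ L.length := Nat.sInf_le hmem
  have hge : L.length ≤ weylLength n x := by
    apply le_csInf ⟨_, hmem⟩
    rintro l ⟨M, hM, rfl, hprodM⟩
    have := NN_le_len hn4 M hM
    rw [hprodM] at this
    omega
  omega

/-- Let `n ≥ 4` and let `w` be a basic involution in the Weyl group
of type `Dₙ` with `w(1) = -n`. Let `u = sₙ s_{n-2} s_{n-3} ⋯ s₂ s₁` (the element of the
previous construction for `j = n`), `v = u⁻¹ w`, and `g₀ = u s₁`. Then `g₀ ≤ v⁻¹` in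
the Bruhat order. -/
theorem statement15 (n : ℕ) (hn : 4 ≤ n)
    (w : Equiv.Perm ℤ) (hw : IsBasicInvolution n w) (hw1 : w 1 = -(n : ℤ)) :
    BruhatLE n (wordProd n (uWordPlus n n) * simpleRefl n 1)
      ((wordProd n (uWordPlus n n))⁻¹ * w)⁻¹ := by
  obtain ⟨⟨hodd, hsupp, heven⟩, hinv, hbasic⟩ := hw
  have SPw : SP n w := ⟨hodd, hsupp⟩
  have hwinv : w⁻¹ = w := mul_eq_one_iff_inv_eq.mp hinv
  have htarget : ((wordProd n (uWordPlus n n))⁻¹ * w)⁻¹ = w * wordProd n (uWordPlus n n) := by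
    rw [mul_inv_rev, inv_inv, hwinv]
  rw [htarget]
  have hwn : w (-(n:ℤ)) = 1 := by
    have h : (w * w) 1 = 1 := by rw [hinv]; rfl
    rw [Perm.mul_apply, hw1] at h
    exact h
  have hu1 : wordProd n (uWordPlus n n) 1 = -(n:ℤ) := by
    rw [u_eval hn]; split_ifs <;> omega
  have hu2 : wordProd n (uWordPlus n n) 2 = 1 := by
    rw [u_eval hn]; split_ifs <;> omega
  set u' := wordProd n (uWordPlus n n) with hu'
  set g0 := u' * simpleRefl n 1 with hg0
  set y := g0⁻¹ * (w * u') with hy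
  have hwu_y : g0 * y = w * u' := by rw [hy, mul_inv_cancel_left]
  have hy1 : y 1 = 1 := by
    rw [hy, Perm.mul_apply, Perm.mul_apply, hu1, hwn]
    apply g0.injective
    rw [Perm.coe_inv, apply_symm_apply]
    exact (g0_one hn).symm
  have hy2 : y 2 = 2 := by
    rw [hy, Perm.mul_apply, Perm.mul_apply, hu2, hw1]
    apply g0.injective
    rw [Perm.coe_inv, apply_symm_apply]
    exact (g0_two hn).symm
  have SPu' : SP n u' := SP_u hn
  have SPg0' : SP n g0 := SP_g0 hn
  have SPwu : SP n (w * u') := SP_mul SPw SPu'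
  have SPy : SP n y := SP_mul (SP_inv SPg0') SPwu
  have hevw : Even (negC n w) := heven
  have hevwu : Even (negC n (w * u')) := (negC_mul_word hn w SPw _ (IsWord_uWord hn)).mpr hevw
  have hevwui : Even (negC n ((w * u')⁻¹)) := by rw [negC_inv _ SPwu]; exact hevwu
  have hWordA : IsWord n (uWordPlus n n ++ [1]) := by
    intro i hi
    rcases List.mem_append.mp hi with h | h
    · exact IsWord_uWord hn i h
    · simp at h; omega
  have hyinv : y⁻¹ = (w * u')⁻¹ * wordProd n (uWordPlus n n ++ [1]) := by
    rw [hy, mul_inv_rev, inv_inv, hg0, wordProd_append, wordProd_singleton, hu']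
  have hevyi : Even (negC n y⁻¹) := by
    rw [hyinv]
    exact (negC_mul_word hn _ (SP_inv SPwu) _ hWordA).mpr hevwui
  have hevy : Even (negC n y) := by rw [← negC_inv y SPy]; exact hevyi
  obtain ⟨Ly, hLy, hLylen, hLyprod⟩ := word_of_NN hn (NN n y) y SPy hevy rfl
  have hNNwu : NN n (w * u') = (n-2) + NN n y := by
    rw [← hwu_y, hg0, hu']
    exact NN_g0_mul hn y SPy hy1 hy2
  have hNNg0 : NN n g0 = n - 2 := NN_g0 hn
  have hredg0 : IsReducedWord n g0 (LL n) := by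
    apply weylLength_of hn g0 (LL n) (IsWord_LL hn)
    · rw [hg0, hu', g0_eq_LL hn]
    · rw [hNNg0, LL_len n hn]
  have hprodwu : wordProd n (LL n ++ Ly) = w * u' := by
    rw [wordProd_append, ← g0_eq_LL hn, hLyprod, ← hu', ← hg0, hwu_y]
  have hredwu : IsReducedWord n (w * u') (LL n ++ Ly) := by
    apply weylLength_of hn (w * u') (LL n ++ Ly) ?_ hprodwu
    · rw [List.length_append, LL_len n hn, hLylen, hNNwu]
    · intro i hi
      rcases List.mem_append.mp hi with h | h
      · exact IsWord_LL hn i h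
      · exact hLy i h
  exact ⟨LL n, LL n ++ Ly, hredg0, hredwu, List.sublist_append_left _ _⟩
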